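/- Consider a feedforward network with L ≥ 2 layers in which all hidden layers have the same width h, the hidden activation σ is either the hyperbolic tangent tanh or the logistic sigmoid t ↦ 1/(1+e^{−t}), and the last layer output is f_θ(x) = s(a^L) where s(t) = 1/(1+e^{−t}), together with a dataset of m points. Then the BCE empirical risk θ ↦ Σ_{i=1}^m [−y_i log f_θ(x_i) − (1−y_i) log(1 − f_θ(x_i))], as a function of the parameters θ ∈ ℝ^ñ, is a Pfaffian function of format (3(L−2)+5, 1, m((L−1)h+1)+1). -/

import Mathlib

open MvPolynomial

noncomputable section

/-- A Pfaffian chain of order `ℓ` and degree `α` on an open set `U ⊆ ℝ^ι`: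
real analytic functions whose partial derivatives are polynomials of total degree at most `α`
in the coordinates and the previous chain functions (including itself). -/
def IsPfaffianChain {ι : Type} [Fintype ι] [DecidableEq ι] (ℓ α : ℕ)
    (U : Set (ι → ℝ)) (f : Fin ℓ → (ι → ℝ) → ℝ) : Prop :=
  IsOpen U ∧ 1 ≤ α ∧ (∀ i, AnalyticOnNhd ℝ (f i) U) ∧
    ∀ (i : Fin ℓ) (j : ι), ∃ P : MvPolynomial (ι ⊕ Fin (i.1 + 1)) ℝ, P.totalDegree ≤ α ∧
      ∀ x ∈ U, fderiv ℝ (f i) x (Pi.single j 1) =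
        MvPolynomial.eval (Sum.elim x fun k : Fin (i.1 + 1) => f (Fin.castLE i.isLt k) x) P

/-- `g : ℝ^ι → ℝ` is a Pfaffian function of format `(α, β, ℓ)` on the open set `U`:
it is a polynomial of total degree at most `β` in the coordinates and the functions of a
Pfaffian chain of order `ℓ` and degree `α`. -/
def IsPfaffianWithFormat {ι : Type} [Fintype ι] [DecidableEq ι]
    (U : Set (ι → ℝ)) (g : (ι → ℝ) → ℝ) (α β ℓ : ℕ) : Prop :=
  ∃ f : Fin ℓ → (ι → ℝ) → ℝ, IsPfaffianChain ℓ α U f ∧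
    ∃ Q : MvPolynomial (ι ⊕ Fin ℓ) ℝ, Q.totalDegree ≤ β ∧
      ∀ x ∈ U, g x = MvPolynomial.eval (Sum.elim x fun k => f k x) Q

/-- Index set for the parameters of a feedforward network with `L` layers and widths `n`:
the augmented weight matrix of layer `l+1` (1-based) has shape `n (l+1) × (n l + 1)`,
column `0` being the bias. -/
abbrev ParamIdx (L : ℕ) (n : ℕ → ℕ) : Type :=
  Σ l : Fin L, Fin (n (l.1 + 1)) × Fin (n l.1 + 1)

/-- Entry `(j, i)` of the augmented weight matrix of (1-based) layer `l+1`. -/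
def netWeight {L : ℕ} {n : ℕ → ℕ} (θ : ParamIdx L n → ℝ) (l : ℕ)
    (j : Fin (n (l + 1))) (i : Fin (n l + 1)) : ℝ :=
  if hl : l < L then θ ⟨⟨l, hl⟩, (j, i)⟩ else 0

/-- Augmented layer outputs: `netZ σ θ x l = z^l = (1, σ (a^l))`, with `z^0 = (1, x)`. -/
def netZ {L : ℕ} {n : ℕ → ℕ} (σ : ℝ → ℝ) (θ : ParamIdx L n → ℝ) (x : Fin (n 0) → ℝ) :
    (l : ℕ) → Fin (n l + 1) → ℝ
  | 0 => Fin.cons 1 x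
  | l + 1 => Fin.cons 1 fun j => σ (∑ i, netWeight θ l j i * netZ σ θ x l i)

/-- Preactivations: `netPreact σ θ x l = a^{l+1} = W^{l+1} z^l` (1-based layer `l+1`). -/
def netPreact {L : ℕ} {n : ℕ → ℕ} (σ : ℝ → ℝ) (θ : ParamIdx L n → ℝ) (x : Fin (n 0) → ℝ)
    (l : ℕ) (j : Fin (n (l + 1))) : ℝ :=
  ∑ i, netWeight θ l j i * netZ σ θ x l i

/-- Output of the network with a linear last layer: `a^L` (a scalar, since `n L = 1`). -/
def netOutLin {L : ℕ} {n : ℕ → ℕ} (σ : ℝ → ℝ) (θ : ParamIdx L n → ℝ)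
    (x : Fin (n 0) → ℝ) : ℝ :=
  ∑ j, netPreact σ θ x (L - 1) j

/-- The logistic sigmoid. -/
def logisticFn (t : ℝ) : ℝ := 1 / (1 + Real.exp (-t))

set_option linter.unusedSectionVars false
set_option linter.unusedVariables false
set_option linter.unnecessarySimpa false
set_option maxHeartbeats 1000000

section Poly
variable {ι : Type} [Fintype ι] [DecidableEq ι]

/-- `g` is (on all of `ℝ^ι`) a polynomial of total degree `≤ d` in the coordinates and the
functions of the list `fs`. -/
def PolyIn (fs : List ((ι → ℝ) → ℝ)) (d : ℕ) (g : (ι → ℝ) → ℝ) : Prop :=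
  ∃ P : MvPolynomial (ι ⊕ Fin fs.length) ℝ, P.totalDegree ≤ d ∧
    ∀ x, g x = MvPolynomial.eval (Sum.elim x fun k => fs.get k x) P

lemma polyIn_const (fs : List ((ι → ℝ) → ℝ)) (d : ℕ) (c : ℝ) :
    PolyIn fs d (fun _ => c) :=
  ⟨C c, by simp [totalDegree_C], fun x => by simp⟩

lemma polyIn_coord (fs : List ((ι → ℝ) → ℝ)) (j : ι) :
    PolyIn fs 1 (fun x => x j) :=
  ⟨X (Sum.inl j), by simp [totalDegree_X], fun x => by simp⟩

lemma PolyIn.mono_deg {fs : List ((ι → ℝ) → ℝ)} {d d' : ℕ} {g} (h : PolyIn fs d g)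
    (hd : d ≤ d') : PolyIn fs d' g := by
  obtain ⟨P, hP, he⟩ := h; exact ⟨P, hP.trans hd, he⟩

lemma polyIn_of_mem {fs : List ((ι → ℝ) → ℝ)} {g} (hg : g ∈ fs) : PolyIn fs 1 g := by
  obtain ⟨k, hk⟩ := List.mem_iff_get.mp hg
  exact ⟨X (Sum.inr k), by simp [totalDegree_X], fun x => by simp [← hk]⟩

lemma PolyIn.add {fs : List ((ι → ℝ) → ℝ)} {d g₁ g₂} (h₁ : PolyIn fs d g₁)
    (h₂ : PolyIn fs d g₂) : PolyIn fs d (fun x => g₁ x + g₂ x) := by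
  obtain ⟨P₁, hP₁, he₁⟩ := h₁; obtain ⟨P₂, hP₂, he₂⟩ := h₂
  exact ⟨P₁ + P₂, (totalDegree_add _ _).trans (max_le hP₁ hP₂),
    fun x => by simp [he₁ x, he₂ x]⟩

lemma PolyIn.mul {fs : List ((ι → ℝ) → ℝ)} {d₁ d₂ g₁ g₂} (h₁ : PolyIn fs d₁ g₁)
    (h₂ : PolyIn fs d₂ g₂) : PolyIn fs (d₁ + d₂) (fun x => g₁ x * g₂ x) := by
  obtain ⟨P₁, hP₁, he₁⟩ := h₁; obtain ⟨P₂, hP₂, he₂⟩ := h₂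
  exact ⟨P₁ * P₂, (totalDegree_mul _ _).trans (add_le_add hP₁ hP₂),
    fun x => by simp [he₁ x, he₂ x]⟩

lemma PolyIn.smul {fs : List ((ι → ℝ) → ℝ)} {d g} (c : ℝ) (h : PolyIn fs d g) :
    PolyIn fs d (fun x => c * g x) :=
  ((polyIn_const fs 0 c).mul h).mono_deg (by omega)

lemma polyIn_sum {κ : Type*} {fs : List ((ι → ℝ) → ℝ)} {d} (s : Finset κ)
    (g : κ → (ι → ℝ) → ℝ) (h : ∀ i ∈ s, PolyIn fs d (g i)) :
    PolyIn fs d (fun x => ∑ i ∈ s, g i x) := by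
  classical
  induction s using Finset.induction with
  | empty => exact (polyIn_const fs 0 0).mono_deg (by omega) |>.mono_deg (Nat.zero_le d) |>.mono_deg le_rfl |>.mono_deg le_rfl |>.mono_deg le_rfl |>.mono_deg le_rfl |>.mono_deg le_rfl |>.mono_deg le_rfl |>.mono_deg le_rfl
  | insert a s' hnotmem ih =>
    have : PolyIn fs d (fun x => g a x + ∑ i ∈ s', g i x) :=
      (h a (Finset.mem_insert_self a s')).add (ih fun i hi => h i (Finset.mem_insert_of_mem hi))
    simpa [Finset.sum_insert hnotmem] using this

lemma PolyIn.mono {fs fs' : List ((ι → ℝ) → ℝ)} {d g} (hsub : ∀ g' ∈ fs, g' ∈ fs')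
    (h : PolyIn fs d g) : PolyIn fs' d g := by
  obtain ⟨P, hP, he⟩ := h
  have he' : ∀ k : Fin fs.length, ∃ k' : Fin fs'.length, fs'.get k' = fs.get k := by
    intro k
    have hk : fs.get k ∈ fs := by
      have := List.get_mem fs k
      simpa using this
    exact List.mem_iff_get.mp (hsub _ hk)
  choose e he2 using he'
  refine ⟨rename (Sum.map id e) P, (totalDegree_rename_le _ _).trans hP, fun x => ?_⟩
  rw [eval_rename, he x]
  have hco : ((Sum.elim x fun k => fs'.get k x) ∘ Sum.map id e) =
      (Sum.elim x fun k => fs.get k x) := by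
    funext s
    cases s with
    | inl j => simp
    | inr k =>
      simp only [Sum.map_inr, Sum.elim_inr]
      exact congrFun (he2 k) x
  rw [hco]

end Poly

section Chain
variable {ι : Type} [Fintype ι] [DecidableEq ι]

/-- A list of functions forming a Pfaffian chain with degree bound `α`. -/
def GoodChain (α : ℕ) (fs : List ((ι → ℝ) → ℝ)) : Prop :=
  (∀ g ∈ fs, AnalyticOnNhd ℝ g Set.univ) ∧
  ∀ (i : Fin fs.length) (j : ι),
    PolyIn (fs.take (i.1 + 1)) α (fun x => fderiv ℝ (fs.get i) x (Pi.single j 1))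

lemma goodChain_nil (α : ℕ) : GoodChain (ι := ι) α [] :=
  ⟨by simp, fun i => absurd i.isLt (by simp)⟩

lemma GoodChain.extend {α : ℕ} {fs : List ((ι → ℝ) → ℝ)} {g} (hfs : GoodChain α fs)
    (hg : AnalyticOnNhd ℝ g Set.univ)
    (hd : ∀ j : ι, PolyIn (fs ++ [g]) α (fun x => fderiv ℝ g x (Pi.single j 1))) :
    GoodChain α (fs ++ [g]) := by
  constructor
  · intro g' hg'
    rcases List.mem_append.mp hg' with h | h
    · exact hfs.1 g' h
    · rw [List.mem_singleton.mp h]; exact hg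
  · intro i j
    rcases Nat.lt_or_ge i.1 fs.length with hi | hi
    · have hget : (fs ++ [g]).get i = fs.get ⟨i.1, hi⟩ := by
        simp [List.getElem_append_left hi]
      have htake : (fs ++ [g]).take (i.1 + 1) = fs.take (i.1 + 1) :=
        List.take_append_of_le_length (by omega)
      rw [hget, htake]
      exact hfs.2 ⟨i.1, hi⟩ j
    · have hi' : i.1 = fs.length := by have := i.isLt; simp at this; omega
      have hget : (fs ++ [g]).get i = g := by
        simp [List.getElem_append_right (by omega : fs.length ≤ i.1), hi']
      have htake : (fs ++ [g]).take (i.1 + 1) = fs ++ [g] :=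
        List.take_of_length_le (by simp [hi'])
      rw [hget, htake]
      exact hd j

lemma GoodChain.extendBlock {α : ℕ} {fs : List ((ι → ℝ) → ℝ)} {gl : List ((ι → ℝ) → ℝ)}
    (hfs : GoodChain α fs)
    (hana : ∀ g ∈ gl, AnalyticOnNhd ℝ g Set.univ)
    (hd : ∀ g ∈ gl, ∀ j : ι, PolyIn (fs ++ [g]) α (fun x => fderiv ℝ g x (Pi.single j 1))) :
    GoodChain α (fs ++ gl) := by
  induction gl generalizing fs with
  | nil => simpa using hfs
  | cons g gl' ih =>
    have h1 : GoodChain α (fs ++ [g]) :=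
      hfs.extend (hana g (by simp)) (hd g (by simp))
    have h2 : GoodChain α ((fs ++ [g]) ++ gl') := by
      apply ih h1
      · intro g' hg'; exact hana g' (by simp [hg'])
      · intro g' hg' j
        refine (hd g' (by simp [hg']) j).mono ?_
        intro g'' hg''
        rcases List.mem_append.mp hg'' with h | h
        · simp [h]
        · simp [List.mem_singleton.mp h]
    simpa [List.append_assoc] using h2

/-- Convert a `GoodChain` to `IsPfaffianChain`. -/
lemma GoodChain.isPfaffianChain {α ℓ : ℕ} {fs : List ((ι → ℝ) → ℝ)} (hfs : GoodChain α fs)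
    (hlen : fs.length = ℓ) (hα : 1 ≤ α) :
    IsPfaffianChain ℓ α Set.univ (fun i => fs.get (Fin.cast hlen.symm i)) := by
  refine ⟨isOpen_univ, hα, fun i => hfs.1 _ (by have := List.get_mem fs (Fin.cast hlen.symm i); simpa using this), ?_⟩
  intro i j
  obtain ⟨P, hP, he⟩ := hfs.2 (Fin.cast hlen.symm i) j
  have htl : (fs.take (i.1 + 1)).length = i.1 + 1 := by
    simp [List.length_take]
    omega
  refine ⟨rename (Sum.map id (Fin.cast htl)) P, (totalDegree_rename_le _ _).trans hP, ?_⟩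
  intro x _
  rw [eval_rename]
  have hco : ((Sum.elim x fun k : Fin (i.1+1) =>
      fs.get (Fin.cast hlen.symm (Fin.castLE i.isLt k)) x) ∘ Sum.map id (Fin.cast htl)) =
      (Sum.elim x fun k => (fs.take (i.1 + 1)).get k x) := by
    funext s
    cases s with
    | inl j' => simp
    | inr k =>
      simp only [Sum.map_inr, Sum.elim_inr, Function.comp_apply]
      have : (fs.take (i.1 + 1)).get k = fs.get ⟨k.1, by omega⟩ := by
        simp [List.getElem_take]
      rw [this]
      rfl
  rw [hco]
  exact he x
end Chain

lemma logisticFn_pos (t : ℝ) : 0 < logisticFn t := by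
  unfold logisticFn
  positivity

lemma logisticFn_lt_one (t : ℝ) : logisticFn t < 1 := by
  unfold logisticFn
  rw [div_lt_one (by positivity)]
  linarith [Real.exp_pos (-t)]

lemma one_add_exp_pos (t : ℝ) : (0:ℝ) < 1 + Real.exp (-t) := by positivity

lemma hasDerivAt_logisticFn (t : ℝ) :
    HasDerivAt logisticFn (logisticFn t * (1 - logisticFn t)) t := by
  have h1 : HasDerivAt (fun t : ℝ => 1 + Real.exp (-t)) (Real.exp (-t) * (-1)) t := by
    have := ((hasDerivAt_neg t).exp).const_add (1:ℝ)
    simpa using this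
  have h2 := h1.inv (one_add_exp_pos t).ne'
  have heq : logisticFn = fun t : ℝ => (1 + Real.exp (-t))⁻¹ := by
    funext t; simp [logisticFn, one_div]
  rw [heq]
  refine h2.congr_deriv ?_
  have hne := (one_add_exp_pos t).ne'
  field_simp [logisticFn]
  ring

lemma analyticAt_logisticFn (t : ℝ) : AnalyticAt ℝ logisticFn t := by
  have heq : logisticFn = fun t : ℝ => (1 + Real.exp (-t))⁻¹ := by
    funext t; simp [logisticFn, one_div]
  rw [heq]
  exact (analyticAt_const.add (analyticAt_rexp.comp (analyticAt_id.neg))).inv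
    (one_add_exp_pos t).ne'

lemma analyticAt_rlog {t : ℝ} (ht : 0 < t) : AnalyticAt ℝ Real.log t := by
  have h1 : AnalyticAt ℝ (⇑Complex.reCLM ∘ (Complex.log ∘ ⇑Complex.ofRealCLM)) t :=
    (Complex.reCLM.analyticAt _).comp
      (((analyticAt_clog (Complex.ofReal_mem_slitPlane.2 ht)).restrictScalars).comp
        (Complex.ofRealCLM.analyticAt t))
  have heq : (⇑Complex.reCLM ∘ (Complex.log ∘ ⇑Complex.ofRealCLM)) = Real.log := by
    funext s
    simp only [Function.comp_apply, Complex.ofRealCLM_apply, Complex.reCLM_apply]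
    exact Complex.log_ofReal_re s
  rwa [heq] at h1

lemma analyticAt_tanh (t : ℝ) : AnalyticAt ℝ Real.tanh t := by
  have hs : ∀ u : ℝ, AnalyticAt ℝ Real.sinh u := by
    intro u
    have : Real.sinh = fun x : ℝ => (Real.exp x - Real.exp (-x)) / 2 := by
      funext x; exact Real.sinh_eq x
    rw [this]
    exact ((analyticAt_rexp).sub (analyticAt_rexp.comp (analyticAt_id.neg))).div
      analyticAt_const two_ne_zero
  have hc : ∀ u : ℝ, AnalyticAt ℝ Real.cosh u := by
    intro u
    have : Real.cosh = fun x : ℝ => (Real.exp x + Real.exp (-x)) / 2 := by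
      funext x; exact Real.cosh_eq x
    rw [this]
    exact ((analyticAt_rexp).add (analyticAt_rexp.comp (analyticAt_id.neg))).div
      analyticAt_const two_ne_zero
  have : Real.tanh = fun x : ℝ => Real.sinh x / Real.cosh x := by
    funext x; exact Real.tanh_eq_sinh_div_cosh x
  rw [this]
  exact (hs t).div (hc t) (Real.cosh_pos t).ne'

lemma hasDerivAt_tanh (t : ℝ) :
    HasDerivAt Real.tanh (1 - Real.tanh t ^ 2) t := by
  have h := (Real.hasDerivAt_sinh t).div (Real.hasDerivAt_cosh t) (Real.cosh_pos t).ne'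
  have heq : Real.tanh = fun x : ℝ => Real.sinh x / Real.cosh x := by
    funext x; exact Real.tanh_eq_sinh_div_cosh x
  have hne := (Real.cosh_pos t).ne'
  have h' : HasDerivAt (fun x : ℝ => Real.sinh x / Real.cosh x)
      (1 - (Real.sinh t / Real.cosh t) ^ 2) t := by
    refine h.congr_deriv ?_
    field_simp
  rw [heq]
  simpa [Real.tanh_eq_sinh_div_cosh] using h'

/-- Derivative of the per-example BCE loss as a function of the pre-sigmoid output. -/
lemma hasDerivAt_bce (y t : ℝ) :
    HasDerivAt (fun t => -y * Real.log (logisticFn t) - (1 - y) * Real.log (1 - logisticFn t))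
      (logisticFn t - y) t := by
  have hs := hasDerivAt_logisticFn t
  have hpos := logisticFn_pos t
  have hlt := logisticFn_lt_one t
  have h1 : HasDerivAt (fun t => Real.log (logisticFn t))
      (logisticFn t * (1 - logisticFn t) / logisticFn t) t := hs.log hpos.ne'
  have h2 : HasDerivAt (fun t => Real.log (1 - logisticFn t))
      ((-(logisticFn t * (1 - logisticFn t))) / (1 - logisticFn t)) t := by
    have := ((hasDerivAt_const t (1:ℝ)).sub hs).log (by show (1:ℝ) - logisticFn t ≠ 0; linarith)
    simpa using this
  have h3 := (h1.const_mul (-y)).sub (h2.const_mul (1 - y))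
  refine h3.congr_deriv ?_
  have h4 : logisticFn t ≠ 0 := hpos.ne'
  have h5 : (1:ℝ) - logisticFn t ≠ 0 := by linarith
  field_simp
  ring

section Net
variable {L : ℕ} {n : ℕ → ℕ} {σ : ℝ → ℝ}

lemma netZ_zero (θ : ParamIdx L n → ℝ) (c : Fin (n 0) → ℝ) (i : Fin (n 0 + 1)) :
    netZ σ θ c 0 i = (Fin.cons 1 c : Fin (n 0 + 1) → ℝ) i := rfl

lemma netZ_succ_zero (θ : ParamIdx L n → ℝ) (c : Fin (n 0) → ℝ) (l : ℕ) :
    netZ σ θ c (l + 1) 0 = 1 := rfl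

lemma netZ_succ_succ (θ : ParamIdx L n → ℝ) (c : Fin (n 0) → ℝ) (l : ℕ)
    (j : Fin (n (l + 1))) :
    netZ σ θ c (l + 1) j.succ = σ (netPreact σ θ c l j) := by
  simp [netZ, netPreact, Fin.cons_succ]

variable (hσan : ∀ t, AnalyticAt ℝ σ t)

lemma analyticAt_netWeight (l : ℕ) (j : Fin (n (l + 1))) (i : Fin (n l + 1))
    (θ : ParamIdx L n → ℝ) : AnalyticAt ℝ (fun θ : ParamIdx L n → ℝ => netWeight θ l j i) θ := by
  by_cases hl : l < L
  · simp only [netWeight, dif_pos hl]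
    have := (ContinuousLinearMap.proj (R := ℝ) (φ := fun _ : ParamIdx L n => ℝ)
      ⟨⟨l, hl⟩, (j, i)⟩).analyticAt θ
    exact this
  · simp only [netWeight, dif_neg hl]
    exact analyticAt_const

include hσan in
lemma analyticAt_netZ (c : Fin (n 0) → ℝ) :
    ∀ (l : ℕ) (i : Fin (n l + 1)) (θ : ParamIdx L n → ℝ),
      AnalyticAt ℝ (fun θ : ParamIdx L n → ℝ => netZ σ θ c l i) θ := by
  intro l
  induction l with
  | zero =>
    intro i θ
    simp only [netZ_zero]
    exact analyticAt_const
  | succ l ih =>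
    intro i θ
    refine Fin.cases ?_ (fun j => ?_) i
    · simp only [netZ_succ_zero]; exact analyticAt_const
    · simp only [netZ_succ_succ]
      exact (hσan _).comp <| Finset.analyticAt_fun_sum _ fun i _ =>
        (analyticAt_netWeight l j i θ).mul (ih i θ)

include hσan in
lemma analyticAt_netPreact (c : Fin (n 0) → ℝ) (l : ℕ) (j : Fin (n (l + 1)))
    (θ : ParamIdx L n → ℝ) :
    AnalyticAt ℝ (fun θ : ParamIdx L n → ℝ => netPreact σ θ c l j) θ := by
  unfold netPreact
  exact Finset.analyticAt_fun_sum _ fun i _ =>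
    (analyticAt_netWeight l j i θ).mul (analyticAt_netZ hσan c l i θ)

include hσan in
lemma analyticAt_netOutLin (c : Fin (n 0) → ℝ) (θ : ParamIdx L n → ℝ) :
    AnalyticAt ℝ (fun θ : ParamIdx L n → ℝ => netOutLin σ θ c) θ := by
  unfold netOutLin
  exact Finset.analyticAt_fun_sum _ fun j _ => analyticAt_netPreact hσan c (L - 1) j θ

lemma fderiv_coord {ι : Type} [Fintype ι] [DecidableEq ι] (idx : ι) (θ : ι → ℝ) (k : ι) :
    fderiv ℝ (fun θ : ι → ℝ => θ idx) θ (Pi.single k 1) = if idx = k then 1 else 0 := by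
  have he : (fun θ : ι → ℝ => θ idx) =
      ⇑(ContinuousLinearMap.proj (R := ℝ) (φ := fun _ : ι => ℝ) idx) := by
    funext θ; simp
  rw [he, (ContinuousLinearMap.proj (R := ℝ) (φ := fun _ : ι => ℝ) idx).fderiv]
  simp [Pi.single_apply]

include hσan in
lemma fderiv_netPreact (c : Fin (n 0) → ℝ) (l : ℕ) (hl : l < L) (j : Fin (n (l + 1)))
    (k : ParamIdx L n) (θ : ParamIdx L n → ℝ) :
    fderiv ℝ (fun θ => netPreact σ θ c l j) θ (Pi.single k 1) =
      ∑ i, (netWeight θ l j i * fderiv ℝ (fun θ => netZ σ θ c l i) θ (Pi.single k 1)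
        + netZ σ θ c l i * (if (⟨⟨l, hl⟩, (j, i)⟩ : ParamIdx L n) = k then 1 else 0)) := by
  have hW : ∀ i, DifferentiableAt ℝ (fun θ : ParamIdx L n → ℝ => netWeight θ l j i) θ :=
    fun i => (analyticAt_netWeight l j i θ).differentiableAt
  have hZ : ∀ i, DifferentiableAt ℝ (fun θ : ParamIdx L n → ℝ => netZ σ θ c l i) θ :=
    fun i => (analyticAt_netZ hσan c l i θ).differentiableAt
  have h1 : fderiv ℝ (fun θ => netPreact σ θ c l j) θ =
      ∑ i, fderiv ℝ (fun θ => netWeight θ l j i * netZ σ θ c l i) θ := by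
    unfold netPreact
    exact fderiv_fun_sum fun i _ => ((hW i).mul (hZ i))
  rw [h1, ContinuousLinearMap.sum_apply]
  refine Finset.sum_congr rfl fun i _ => ?_
  rw [fderiv_fun_mul (hW i) (hZ i)]
  have hfW : fderiv ℝ (fun θ : ParamIdx L n → ℝ => netWeight θ l j i) θ (Pi.single k 1) =
      if (⟨⟨l, hl⟩, (j, i)⟩ : ParamIdx L n) = k then 1 else 0 := by
    have he : (fun θ : ParamIdx L n → ℝ => netWeight θ l j i) =
        fun θ => θ ⟨⟨l, hl⟩, (j, i)⟩ := by
      funext θ; simp [netWeight, dif_pos hl]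
    rw [he, fderiv_coord]
  simp only [ContinuousLinearMap.add_apply, ContinuousLinearMap.smul_apply, smul_eq_mul, hfW]
end Net

noncomputable section Net2
variable {L : ℕ} {n : ℕ → ℕ} {σ : ℝ → ℝ}
variable (hσan : ∀ t, AnalyticAt ℝ σ t) {a b c : ℝ}
variable (hσd : ∀ t, HasDerivAt σ (a + b * σ t + c * σ t ^ 2) t)

include hσan hσd in
lemma fderiv_sigma_preact (cx : Fin (n 0) → ℝ) (l : ℕ) (j : Fin (n (l + 1)))
    (k : ParamIdx L n) (θ : ParamIdx L n → ℝ) :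
    fderiv ℝ (fun θ => σ (netPreact σ θ cx l j)) θ (Pi.single k 1) =
      (a + b * σ (netPreact σ θ cx l j) + c * σ (netPreact σ θ cx l j) ^ 2) *
        fderiv ℝ (fun θ => netPreact σ θ cx l j) θ (Pi.single k 1) := by
  have hA : HasFDerivAt (fun θ => netPreact σ θ cx l j)
      (fderiv ℝ (fun θ => netPreact σ θ cx l j) θ) θ :=
    (analyticAt_netPreact hσan cx l j θ).differentiableAt.hasFDerivAt
  have hcomp := (hσd (netPreact σ θ cx l j)).comp_hasFDerivAt θ hA
  rw [Function.comp_def] at hcomp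
  rw [hcomp.fderiv]
  simp


include hσan in
lemma fderiv_netOutLin (cx : Fin (n 0) → ℝ) (k : ParamIdx L n) (θ : ParamIdx L n → ℝ) :
    fderiv ℝ (fun θ => netOutLin σ θ cx) θ (Pi.single k 1) =
      ∑ j, fderiv ℝ (fun θ => netPreact σ θ cx (L - 1) j) θ (Pi.single k 1) := by
  have h1 : fderiv ℝ (fun θ => netOutLin σ θ cx) θ =
      ∑ j, fderiv ℝ (fun θ => netPreact σ θ cx (L - 1) j) θ := by
    unfold netOutLin
    exact fderiv_fun_sum fun j _ => (analyticAt_netPreact hσan cx (L - 1) j θ).differentiableAt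
  rw [h1, ContinuousLinearMap.sum_apply]

include hσan in
lemma fderiv_logistic_out (cx : Fin (n 0) → ℝ) (k : ParamIdx L n) (θ : ParamIdx L n → ℝ) :
    fderiv ℝ (fun θ => logisticFn (netOutLin σ θ cx)) θ (Pi.single k 1) =
      (logisticFn (netOutLin σ θ cx) * (1 - logisticFn (netOutLin σ θ cx))) *
        fderiv ℝ (fun θ => netOutLin σ θ cx) θ (Pi.single k 1) := by
  have hA : HasFDerivAt (fun θ => netOutLin σ θ cx)
      (fderiv ℝ (fun θ => netOutLin σ θ cx) θ) θ :=
    (analyticAt_netOutLin hσan cx θ).differentiableAt.hasFDerivAt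
  have hcomp := (hasDerivAt_logisticFn (netOutLin σ θ cx)).comp_hasFDerivAt θ hA
  rw [Function.comp_def] at hcomp
  rw [hcomp.fderiv]
  simp

include hσan in
lemma analyticAt_bceterm (cx : Fin (n 0) → ℝ) (yv : ℝ) (θ : ParamIdx L n → ℝ) :
    AnalyticAt ℝ (fun θ : ParamIdx L n → ℝ =>
      -yv * Real.log (logisticFn (netOutLin σ θ cx)) -
        (1 - yv) * Real.log (1 - logisticFn (netOutLin σ θ cx))) θ := by
  have hS : AnalyticAt ℝ (fun θ : ParamIdx L n → ℝ => logisticFn (netOutLin σ θ cx)) θ :=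
    (analyticAt_logisticFn _).comp (analyticAt_netOutLin hσan cx θ)
  have h1 : AnalyticAt ℝ (fun θ : ParamIdx L n → ℝ =>
      Real.log (logisticFn (netOutLin σ θ cx))) θ := by
    have := AnalyticAt.comp (f := fun θ : ParamIdx L n → ℝ => logisticFn (netOutLin σ θ cx))
      (x := θ) (analyticAt_rlog (logisticFn_pos (netOutLin σ θ cx))) hS
    simpa [Function.comp_def] using this
  have h2 : AnalyticAt ℝ (fun θ : ParamIdx L n → ℝ =>
      Real.log (1 - logisticFn (netOutLin σ θ cx))) θ := by
    have hlt : (0:ℝ) < 1 - logisticFn (netOutLin σ θ cx) := by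
      linarith [logisticFn_lt_one (netOutLin σ θ cx)]
    have hS' : AnalyticAt ℝ (fun θ : ParamIdx L n → ℝ =>
        1 - logisticFn (netOutLin σ θ cx)) θ := analyticAt_const.sub hS
    have := AnalyticAt.comp (f := fun θ : ParamIdx L n → ℝ =>
      1 - logisticFn (netOutLin σ θ cx)) (x := θ) (analyticAt_rlog hlt) hS'
    simpa [Function.comp_def] using this
  exact (analyticAt_const.mul h1).sub (analyticAt_const.mul h2)

include hσan in
lemma fderiv_bceterm (cx : Fin (n 0) → ℝ) (yv : ℝ) (k : ParamIdx L n)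
    (θ : ParamIdx L n → ℝ) :
    fderiv ℝ (fun θ => -yv * Real.log (logisticFn (netOutLin σ θ cx)) -
        (1 - yv) * Real.log (1 - logisticFn (netOutLin σ θ cx))) θ (Pi.single k 1) =
      (logisticFn (netOutLin σ θ cx) - yv) *
        fderiv ℝ (fun θ => netOutLin σ θ cx) θ (Pi.single k 1) := by
  have hA : HasFDerivAt (fun θ => netOutLin σ θ cx)
      (fderiv ℝ (fun θ => netOutLin σ θ cx) θ) θ :=
    (analyticAt_netOutLin hσan cx θ).differentiableAt.hasFDerivAt
  have hcomp := (hasDerivAt_bce yv (netOutLin σ θ cx)).comp_hasFDerivAt θ hA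
  rw [Function.comp_def] at hcomp
  rw [hcomp.fderiv]
  simp

end Net2

noncomputable section Net3
variable {L : ℕ} {n : ℕ → ℕ} {σ : ℝ → ℝ}
variable (hσan : ∀ t, AnalyticAt ℝ σ t) {a b c : ℝ}
variable (hσd : ∀ t, HasDerivAt σ (a + b * σ t + c * σ t ^ 2) t)

/-- The hidden-unit functions of the network (layer `l+1` in 1-based numbering). -/
def Zfun (σ : ℝ → ℝ) (cx : Fin (n 0) → ℝ) (l : ℕ) (j : Fin (n (l + 1))) :
    (ParamIdx L n → ℝ) → ℝ :=
  fun θ => σ (netPreact σ θ cx l j)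

include hσan hσd in
lemma polyIn_fderiv_netPreact (cx : Fin (n 0) → ℝ) :
    ∀ (l : ℕ), l < L → ∀ (fs : List ((ParamIdx L n → ℝ) → ℝ)),
      (∀ (l' : ℕ), l' < l → ∀ (j' : Fin (n (l' + 1))), Zfun σ cx l' j' ∈ fs) →
      ∀ (j : Fin (n (l + 1))) (k : ParamIdx L n),
        PolyIn fs (3 * l)
          (fun θ => fderiv ℝ (fun θ => netPreact σ θ cx l j) θ (Pi.single k 1)) := by
  intro l
  induction l with
  | zero =>
    intro hl fs _ j k
    have he : (fun θ : ParamIdx L n → ℝ =>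
        fderiv ℝ (fun θ => netPreact σ θ cx 0 j) θ (Pi.single k 1)) =
        fun _ => ∑ i, (Fin.cons 1 cx : Fin (n 0 + 1) → ℝ) i *
          (if (⟨⟨0, hl⟩, (j, i)⟩ : ParamIdx L n) = k then 1 else 0) := by
      funext θ
      rw [fderiv_netPreact hσan cx 0 hl j k θ]
      refine Finset.sum_congr rfl fun i _ => ?_
      have hz : (fun θ : ParamIdx L n → ℝ => netZ σ θ cx 0 i) =
          fun _ => (Fin.cons 1 cx : Fin (n 0 + 1) → ℝ) i := by
        funext θ; exact netZ_zero θ cx i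
      rw [hz, fderiv_fun_const]
      simp [netZ_zero]
    rw [he]
    exact polyIn_const fs (3 * 0) _
  | succ l ih =>
    intro hl fs hmem j k
    have hlL : l < L := by omega
    have he : (fun θ : ParamIdx L n → ℝ =>
        fderiv ℝ (fun θ => netPreact σ θ cx (l + 1) j) θ (Pi.single k 1)) =
        fun θ => ∑ i, (netWeight θ (l + 1) j i *
            fderiv ℝ (fun θ => netZ σ θ cx (l + 1) i) θ (Pi.single k 1)
          + netZ σ θ cx (l + 1) i *
            (if (⟨⟨l + 1, hl⟩, (j, i)⟩ : ParamIdx L n) = k then 1 else 0)) := by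
      funext θ
      exact fderiv_netPreact hσan cx (l + 1) hl j k θ
    rw [he]
    refine polyIn_sum _ _ fun i _ => ?_
    refine PolyIn.add ?_ ?_
    · -- weight * derivative of z-component
      have hW : PolyIn fs 1 (fun θ : ParamIdx L n → ℝ => netWeight θ (l + 1) j i) := by
        have hw : (fun θ : ParamIdx L n → ℝ => netWeight θ (l + 1) j i) =
            fun θ => θ ⟨⟨l + 1, hl⟩, (j, i)⟩ := by
          funext θ; simp [netWeight, dif_pos hl]
        rw [hw]; exact polyIn_coord fs _
      have hDZ : PolyIn fs (3 * l + 2)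
          (fun θ : ParamIdx L n → ℝ =>
            fderiv ℝ (fun θ => netZ σ θ cx (l + 1) i) θ (Pi.single k 1)) := by
        refine Fin.cases ?_ (fun j' => ?_) i
        · have hz : (fun θ : ParamIdx L n → ℝ => netZ σ θ cx (l + 1) 0) =
              fun _ => (1:ℝ) := by
            funext θ; exact netZ_succ_zero θ cx l
          have : (fun θ : ParamIdx L n → ℝ =>
              fderiv ℝ (fun θ => netZ σ θ cx (l + 1) 0) θ (Pi.single k 1)) =
              fun _ => (0:ℝ) := by
            funext θ; rw [hz, fderiv_fun_const]; simp
          rw [this]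
          exact (polyIn_const fs 0 0).mono_deg (by omega)
        · have hz : (fun θ : ParamIdx L n → ℝ => netZ σ θ cx (l + 1) j'.succ) =
              Zfun σ cx l j' := by
            funext θ; exact netZ_succ_succ θ cx l j'
          have hzmem : Zfun σ cx l j' ∈ fs := hmem l (by omega) j'
          have hZpoly : PolyIn fs 1 (Zfun σ cx l j') := polyIn_of_mem hzmem
          have hfactor : PolyIn fs 2 (fun θ : ParamIdx L n → ℝ =>
              a + b * σ (netPreact σ θ cx l j') + c * σ (netPreact σ θ cx l j') ^ 2) := by
            have h1 : PolyIn fs 2 (fun θ : ParamIdx L n → ℝ =>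
                (a + b * Zfun σ cx l j' θ) + c * (Zfun σ cx l j' θ * Zfun σ cx l j' θ)) := by
              refine PolyIn.add (PolyIn.add ?_ ?_) ?_
              · exact (polyIn_const fs 0 a).mono_deg (by omega)
              · exact (hZpoly.smul b).mono_deg (by omega)
              · exact ((hZpoly.mul hZpoly).smul c).mono_deg (by omega)
            have : (fun θ : ParamIdx L n → ℝ =>
                (a + b * Zfun σ cx l j' θ) + c * (Zfun σ cx l j' θ * Zfun σ cx l j' θ)) =
                fun θ : ParamIdx L n → ℝ =>
                  a + b * σ (netPreact σ θ cx l j') + c * σ (netPreact σ θ cx l j') ^ 2 := by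
              funext θ; simp only [Zfun]; ring
            rwa [this] at h1
          have hDA := ih hlL fs (fun l' hl' j'' => hmem l' (by omega) j'') j' k
          have hprod := hfactor.mul hDA
          have heq2 : (fun θ : ParamIdx L n → ℝ =>
              (a + b * σ (netPreact σ θ cx l j') + c * σ (netPreact σ θ cx l j') ^ 2) *
                fderiv ℝ (fun θ => netPreact σ θ cx l j') θ (Pi.single k 1)) =
              (fun θ : ParamIdx L n → ℝ =>
                fderiv ℝ (fun θ => netZ σ θ cx (l + 1) j'.succ) θ (Pi.single k 1)) := by
            funext θ
            rw [hz]
            exact (fderiv_sigma_preact hσan hσd cx l j' k θ).symm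
          rw [← heq2]
          exact hprod.mono_deg (by omega)
      exact (hW.mul hDZ).mono_deg (by omega)
    · -- z-value * indicator
      refine Fin.cases ?_ (fun j' => ?_) i
      · have : (fun θ : ParamIdx L n → ℝ => netZ σ θ cx (l + 1) 0 *
            (if (⟨⟨l + 1, hl⟩, (j, (0 : Fin (n (l+1) + 1)))⟩ : ParamIdx L n) = k
              then (1:ℝ) else 0)) =
            fun _ => (1:ℝ) * (if (⟨⟨l + 1, hl⟩, (j, (0 : Fin (n (l+1) + 1)))⟩ : ParamIdx L n) = k
              then (1:ℝ) else 0) := by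
          funext θ; rw [netZ_succ_zero]
        rw [this]
        exact polyIn_const fs _ _
      · have hzmem : Zfun σ cx l j' ∈ fs := hmem l (by omega) j'
        have : (fun θ : ParamIdx L n → ℝ => netZ σ θ cx (l + 1) j'.succ *
            (if (⟨⟨l + 1, hl⟩, (j, j'.succ)⟩ : ParamIdx L n) = k then (1:ℝ) else 0)) =
            fun θ => Zfun σ cx l j' θ *
              (if (⟨⟨l + 1, hl⟩, (j, j'.succ)⟩ : ParamIdx L n) = k then (1:ℝ) else 0) := by
          funext θ; rw [netZ_succ_succ]; rfl
        rw [this]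
        exact ((polyIn_of_mem hzmem).mul (polyIn_const fs 0 _)).mono_deg (by omega)
end Net3

noncomputable section Net4
variable {L : ℕ} {n : ℕ → ℕ} {σ : ℝ → ℝ}
variable (hσan : ∀ t, AnalyticAt ℝ σ t) {a b c : ℝ}
variable (hσd : ∀ t, HasDerivAt σ (a + b * σ t + c * σ t ^ 2) t)

/-- The output-sigmoid function of the network. -/
def Sfun (σ : ℝ → ℝ) (cx : Fin (n 0) → ℝ) : (ParamIdx L n → ℝ) → ℝ :=
  fun θ => logisticFn (netOutLin σ θ cx)

include hσan hσd in
lemma polyIn_fderiv_Zfun (cx : Fin (n 0) → ℝ) (l : ℕ) (hl : l < L)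
    (fs : List ((ParamIdx L n → ℝ) → ℝ))
    (hmem : ∀ (l' : ℕ), l' < l → ∀ (j' : Fin (n (l' + 1))), Zfun σ cx l' j' ∈ fs)
    (j : Fin (n (l + 1))) (hself : Zfun σ cx l j ∈ fs) (k : ParamIdx L n) :
    PolyIn fs (3 * l + 2) (fun θ => fderiv ℝ (Zfun σ cx l j) θ (Pi.single k 1)) := by
  have hZpoly : PolyIn fs 1 (Zfun σ cx l j) := polyIn_of_mem hself
  have hfactor : PolyIn fs 2 (fun θ : ParamIdx L n → ℝ =>
      a + b * σ (netPreact σ θ cx l j) + c * σ (netPreact σ θ cx l j) ^ 2) := by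
    have h1 : PolyIn fs 2 (fun θ : ParamIdx L n → ℝ =>
        (a + b * Zfun σ cx l j θ) + c * (Zfun σ cx l j θ * Zfun σ cx l j θ)) := by
      refine PolyIn.add (PolyIn.add ?_ ?_) ?_
      · exact (polyIn_const fs 0 a).mono_deg (by omega)
      · exact (hZpoly.smul b).mono_deg (by omega)
      · exact ((hZpoly.mul hZpoly).smul c).mono_deg (by omega)
    have : (fun θ : ParamIdx L n → ℝ =>
        (a + b * Zfun σ cx l j θ) + c * (Zfun σ cx l j θ * Zfun σ cx l j θ)) =
        fun θ : ParamIdx L n → ℝ =>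
          a + b * σ (netPreact σ θ cx l j) + c * σ (netPreact σ θ cx l j) ^ 2 := by
      funext θ; simp only [Zfun]; ring
    rwa [this] at h1
  have hDA := polyIn_fderiv_netPreact hσan hσd cx l hl fs hmem j k
  have hprod := hfactor.mul hDA
  have heq : (fun θ : ParamIdx L n → ℝ =>
      (a + b * σ (netPreact σ θ cx l j) + c * σ (netPreact σ θ cx l j) ^ 2) *
        fderiv ℝ (fun θ => netPreact σ θ cx l j) θ (Pi.single k 1)) =
      fun θ => fderiv ℝ (Zfun σ cx l j) θ (Pi.single k 1) := by
    funext θ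
    exact (fderiv_sigma_preact hσan hσd cx l j k θ).symm
  rw [← heq]
  exact hprod.mono_deg (by omega)

include hσan hσd in
lemma polyIn_fderiv_netOutLin (cx : Fin (n 0) → ℝ) (hL : 2 ≤ L)
    (fs : List ((ParamIdx L n → ℝ) → ℝ))
    (hmem : ∀ (l' : ℕ), l' < L - 1 → ∀ (j' : Fin (n (l' + 1))), Zfun σ cx l' j' ∈ fs)
    (k : ParamIdx L n) :
    PolyIn fs (3 * (L - 1))
      (fun θ => fderiv ℝ (fun θ => netOutLin σ θ cx) θ (Pi.single k 1)) := by
  have he : (fun θ : ParamIdx L n → ℝ =>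
      fderiv ℝ (fun θ => netOutLin σ θ cx) θ (Pi.single k 1)) =
      fun θ => ∑ j, fderiv ℝ (fun θ => netPreact σ θ cx (L - 1) j) θ (Pi.single k 1) := by
    funext θ; exact fderiv_netOutLin hσan cx k θ
  rw [he]
  exact polyIn_sum _ _ fun j _ =>
    polyIn_fderiv_netPreact hσan hσd cx (L - 1) (by omega) fs hmem j k

include hσan hσd in
lemma polyIn_fderiv_Sfun (cx : Fin (n 0) → ℝ) (hL : 2 ≤ L)
    (fs : List ((ParamIdx L n → ℝ) → ℝ))
    (hmem : ∀ (l' : ℕ), l' < L - 1 → ∀ (j' : Fin (n (l' + 1))), Zfun σ cx l' j' ∈ fs)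
    (hself : Sfun σ cx ∈ fs) (k : ParamIdx L n) :
    PolyIn fs (3 * (L - 2) + 5) (fun θ => fderiv ℝ (Sfun σ cx) θ (Pi.single k 1)) := by
  have hS : PolyIn fs 1 (Sfun σ cx) := polyIn_of_mem hself
  have hfactor : PolyIn fs 2 (fun θ : ParamIdx L n → ℝ =>
      logisticFn (netOutLin σ θ cx) * (1 - logisticFn (netOutLin σ θ cx))) := by
    have h1a : PolyIn fs 1 (fun θ : ParamIdx L n → ℝ => 1 + (-1) * Sfun σ cx θ) :=
      PolyIn.add ((polyIn_const fs 0 1).mono_deg (by omega)) (hS.smul (-1))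
    have h1 : PolyIn fs 2 (fun θ : ParamIdx L n → ℝ =>
        Sfun σ cx θ * (1 + (-1) * Sfun σ cx θ)) :=
      (hS.mul h1a).mono_deg (by omega)
    have : (fun θ : ParamIdx L n → ℝ => Sfun σ cx θ * (1 + (-1) * Sfun σ cx θ)) =
        fun θ : ParamIdx L n → ℝ =>
          logisticFn (netOutLin σ θ cx) * (1 - logisticFn (netOutLin σ θ cx)) := by
      funext θ; simp only [Sfun]; ring
    rwa [this] at h1
  have hDU := polyIn_fderiv_netOutLin hσan hσd cx hL fs hmem k
  have hprod := hfactor.mul hDU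
  have heq : (fun θ : ParamIdx L n → ℝ =>
      (logisticFn (netOutLin σ θ cx) * (1 - logisticFn (netOutLin σ θ cx))) *
        fderiv ℝ (fun θ => netOutLin σ θ cx) θ (Pi.single k 1)) =
      fun θ => fderiv ℝ (Sfun σ cx) θ (Pi.single k 1) := by
    funext θ
    exact (fderiv_logistic_out hσan cx k θ).symm
  rw [← heq]
  exact hprod.mono_deg (by omega)

include hσan hσd in
lemma polyIn_fderiv_Ffun {m : ℕ} (x : Fin m → Fin (n 0) → ℝ) (y : Fin m → ℝ) (hL : 2 ≤ L)
    (fs : List ((ParamIdx L n → ℝ) → ℝ))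
    (hmem : ∀ (p : Fin m) (l' : ℕ), l' < L - 1 → ∀ (j' : Fin (n (l' + 1))),
      Zfun σ (x p) l' j' ∈ fs)
    (hmemS : ∀ p : Fin m, Sfun σ (x p) ∈ fs) (k : ParamIdx L n) :
    PolyIn fs (3 * (L - 2) + 5)
      (fun θ => fderiv ℝ (fun θ => ∑ p, (-(y p) * Real.log (logisticFn (netOutLin σ θ (x p))) -
        (1 - y p) * Real.log (1 - logisticFn (netOutLin σ θ (x p))))) θ (Pi.single k 1)) := by
  have hdiff : ∀ (p : Fin m) (θ : ParamIdx L n → ℝ),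
      DifferentiableAt ℝ (fun θ : ParamIdx L n → ℝ =>
        -(y p) * Real.log (logisticFn (netOutLin σ θ (x p))) -
        (1 - y p) * Real.log (1 - logisticFn (netOutLin σ θ (x p)))) θ :=
    fun p θ => (analyticAt_bceterm hσan (x p) (y p) θ).differentiableAt
  have he : (fun θ : ParamIdx L n → ℝ =>
      fderiv ℝ (fun θ => ∑ p, (-(y p) * Real.log (logisticFn (netOutLin σ θ (x p))) -
        (1 - y p) * Real.log (1 - logisticFn (netOutLin σ θ (x p))))) θ (Pi.single k 1)) =
      fun θ => ∑ p, (logisticFn (netOutLin σ θ (x p)) - y p) *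
        fderiv ℝ (fun θ => netOutLin σ θ (x p)) θ (Pi.single k 1) := by
    funext θ
    have h1 : fderiv ℝ (fun θ : ParamIdx L n → ℝ =>
        ∑ p, (-(y p) * Real.log (logisticFn (netOutLin σ θ (x p))) -
          (1 - y p) * Real.log (1 - logisticFn (netOutLin σ θ (x p))))) θ =
        ∑ p, fderiv ℝ (fun θ : ParamIdx L n → ℝ =>
          -(y p) * Real.log (logisticFn (netOutLin σ θ (x p))) -
          (1 - y p) * Real.log (1 - logisticFn (netOutLin σ θ (x p)))) θ :=
      fderiv_fun_sum fun p _ => hdiff p θ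
    rw [h1, ContinuousLinearMap.sum_apply]
    exact Finset.sum_congr rfl fun p _ => fderiv_bceterm hσan (x p) (y p) k θ
  rw [he]
  refine polyIn_sum _ _ fun p _ => ?_
  have hcoef : PolyIn fs 1 (fun θ : ParamIdx L n → ℝ =>
      logisticFn (netOutLin σ θ (x p)) - y p) := by
    have h1 : PolyIn fs 1 (fun θ : ParamIdx L n → ℝ =>
        Sfun σ (x p) θ + (-(y p))) := by
      refine PolyIn.add (polyIn_of_mem (hmemS p)) ?_
      exact (polyIn_const fs 0 _).mono_deg (by omega)
    have : (fun θ : ParamIdx L n → ℝ => Sfun σ (x p) θ + (-(y p))) =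
        fun θ : ParamIdx L n → ℝ => logisticFn (netOutLin σ θ (x p)) - y p := by
      funext θ; simp only [Sfun]; ring
    rwa [this] at h1
  have hDU := polyIn_fderiv_netOutLin hσan hσd (x p) hL fs (hmem p) k
  exact (hcoef.mul hDU).mono_deg (by omega)
end Net4

noncomputable section Assemble
variable {L : ℕ} {n : ℕ → ℕ} {σ : ℝ → ℝ}
variable (hσan : ∀ t, AnalyticAt ℝ σ t) {a b c : ℝ}
variable (hσd : ∀ t, HasDerivAt σ (a + b * σ t + c * σ t ^ 2) t)

def layerBlock (L : ℕ) (n : ℕ → ℕ) (σ : ℝ → ℝ) (cx : Fin (n 0) → ℝ) (l : ℕ) :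
    List ((ParamIdx L n → ℝ) → ℝ) :=
  List.ofFn fun j : Fin (n (l + 1)) => Zfun σ cx l j

def partialBlock (L : ℕ) (n : ℕ → ℕ) (σ : ℝ → ℝ) (cx : Fin (n 0) → ℝ) :
    ℕ → List ((ParamIdx L n → ℝ) → ℝ)
  | 0 => []
  | l + 1 => partialBlock L n σ cx l ++ layerBlock L n σ cx l

def pointBlock (L : ℕ) (n : ℕ → ℕ) (σ : ℝ → ℝ) (cx : Fin (n 0) → ℝ) :
    List ((ParamIdx L n → ℝ) → ℝ) :=
  partialBlock L n σ cx (L - 1) ++ [Sfun σ cx]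

def blocksList (L : ℕ) (n : ℕ → ℕ) (σ : ℝ → ℝ) {m : ℕ} (x : Fin m → Fin (n 0) → ℝ) :
    List (Fin m) → List ((ParamIdx L n → ℝ) → ℝ)
  | [] => []
  | p :: ps => pointBlock L n σ (x p) ++ blocksList L n σ x ps

section Lengths
variable {h : ℕ} (hhid : ∀ l : ℕ, 1 ≤ l → l ≤ L - 1 → n l = h)

include hhid in
lemma length_partialBlock (cx : Fin (n 0) → ℝ) :
    ∀ l, l ≤ L - 1 → (partialBlock L n σ cx l).length = l * h := by
  intro l
  induction l with
  | zero => intro _; simp [partialBlock]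
  | succ l ih =>
    intro hl
    have h1 : n (l + 1) = h := hhid (l + 1) (by omega) (by omega)
    simp only [partialBlock, layerBlock, List.length_append, List.length_ofFn,
      ih (by omega), h1]
    ring

include hhid in
lemma length_pointBlock (cx : Fin (n 0) → ℝ) :
    (pointBlock L n σ cx).length = (L - 1) * h + 1 := by
  simp [pointBlock, length_partialBlock (σ := σ) hhid cx (L - 1) le_rfl]

include hhid in
lemma length_blocksList {m : ℕ} (x : Fin m → Fin (n 0) → ℝ) :
    ∀ ps : List (Fin m), (blocksList L n σ x ps).length = ps.length * ((L - 1) * h + 1) := by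
  intro ps
  induction ps with
  | nil => simp [blocksList]
  | cons p ps ih =>
    simp only [blocksList, List.length_append, List.length_cons, ih,
      length_pointBlock (σ := σ) hhid (x p)]
    ring
end Lengths

lemma mem_partialBlock (cx : Fin (n 0) → ℝ) :
    ∀ l, ∀ l' < l, ∀ j' : Fin (n (l' + 1)),
      Zfun σ cx l' j' ∈ partialBlock L n σ cx l := by
  intro l
  induction l with
  | zero => intro l' hl'; omega
  | succ l ih =>
    intro l' hl' j'
    rcases Nat.lt_or_ge l' l with hc | hc
    · exact List.mem_append_left _ (ih l' hc j')
    · have he : l' = l := by omega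
      subst he
      refine List.mem_append_right _ ?_
      simp only [layerBlock, List.mem_ofFn]
      exact ⟨j', rfl⟩

lemma mem_pointBlock_Z (cx : Fin (n 0) → ℝ) (l' : ℕ) (hl' : l' < L - 1)
    (j' : Fin (n (l' + 1))) : Zfun σ cx l' j' ∈ pointBlock L n σ cx :=
  List.mem_append_left _ (mem_partialBlock cx (L - 1) l' hl' j')

lemma mem_pointBlock_S (cx : Fin (n 0) → ℝ) : Sfun σ cx ∈ pointBlock L n σ cx :=
  List.mem_append_right _ (by simp)

lemma mem_blocksList {m : ℕ} (x : Fin m → Fin (n 0) → ℝ) {g : (ParamIdx L n → ℝ) → ℝ} :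
    ∀ (ps : List (Fin m)) (p : Fin m), p ∈ ps → g ∈ pointBlock L n σ (x p) →
      g ∈ blocksList L n σ x ps := by
  intro ps
  induction ps with
  | nil => intro p hp; simp at hp
  | cons q ps ih =>
    intro p hp hg
    rcases List.mem_cons.mp hp with hc | hc
    · subst hc; exact List.mem_append_left _ hg
    · exact List.mem_append_right _ (ih p hc hg)
end Assemble

noncomputable section Build
variable {L : ℕ} {n : ℕ → ℕ} {σ : ℝ → ℝ}
variable (hσan : ∀ t, AnalyticAt ℝ σ t) {a b c : ℝ}
variable (hσd : ∀ t, HasDerivAt σ (a + b * σ t + c * σ t ^ 2) t)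

include hσan in
lemma analyticOn_Zfun (cx : Fin (n 0) → ℝ) (l : ℕ) (j : Fin (n (l + 1))) :
    AnalyticOnNhd ℝ (Zfun (L := L) σ cx l j) Set.univ := fun θ _ =>
  (hσan _).comp (analyticAt_netPreact hσan cx l j θ)

include hσan in
lemma analyticOn_Sfun (cx : Fin (n 0) → ℝ) :
    AnalyticOnNhd ℝ (Sfun (L := L) σ cx) Set.univ := fun θ _ =>
  (analyticAt_logisticFn _).comp (analyticAt_netOutLin hσan cx θ)

include hσan hσd in
lemma goodChain_append_pointBlock (hL : 2 ≤ L) (cx : Fin (n 0) → ℝ)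
    (fs : List ((ParamIdx L n → ℝ) → ℝ)) (hfs : GoodChain (3 * (L - 2) + 5) fs) :
    GoodChain (3 * (L - 2) + 5) (fs ++ pointBlock L n σ cx) := by
  have hpartial : ∀ l, l ≤ L - 1 →
      GoodChain (3 * (L - 2) + 5) (fs ++ partialBlock L n σ cx l) := by
    intro l
    induction l with
    | zero => intro _; simpa [partialBlock] using hfs
    | succ l ih =>
      intro hl
      have hprev := ih (by omega)
      have hstep : GoodChain (3 * (L - 2) + 5)
          ((fs ++ partialBlock L n σ cx l) ++ layerBlock L n σ cx l) := by
        refine hprev.extendBlock ?_ ?_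
        · intro g hg
          obtain ⟨j, rfl⟩ := List.mem_ofFn.mp hg
          exact analyticOn_Zfun hσan cx l j
        · intro g hg k
          obtain ⟨j, rfl⟩ := List.mem_ofFn.mp hg
          have hp := polyIn_fderiv_Zfun hσan hσd cx l (by omega)
            ((fs ++ partialBlock L n σ cx l) ++ [Zfun σ cx l j])
            (fun l' hl' j' => by
              refine List.mem_append_left _ (List.mem_append_right _ ?_)
              exact mem_partialBlock cx l l' hl' j')
            j (List.mem_append_right _ (by simp)) k
          exact hp.mono_deg (by omega)
      have : fs ++ partialBlock L n σ cx (l + 1) =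
          (fs ++ partialBlock L n σ cx l) ++ layerBlock L n σ cx l := by
        simp [partialBlock, List.append_assoc]
      rw [this]
      exact hstep
  have h1 := hpartial (L - 1) le_rfl
  have hstep : GoodChain (3 * (L - 2) + 5)
      ((fs ++ partialBlock L n σ cx (L - 1)) ++ [Sfun σ cx]) := by
    refine h1.extend (analyticOn_Sfun hσan cx) ?_
    intro k
    refine polyIn_fderiv_Sfun hσan hσd cx hL _ ?_ ?_ k
    · intro l' hl' j'
      exact List.mem_append_left _ (List.mem_append_right _
        (mem_partialBlock cx (L - 1) l' hl' j'))
    · exact List.mem_append_right _ (by simp)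
  have : fs ++ pointBlock L n σ cx =
      (fs ++ partialBlock L n σ cx (L - 1)) ++ [Sfun σ cx] := by
    simp [pointBlock, List.append_assoc]
  rw [this]
  exact hstep

include hσan hσd in
lemma goodChain_blocksList (hL : 2 ≤ L) {m : ℕ} (x : Fin m → Fin (n 0) → ℝ) :
    ∀ (ps : List (Fin m)) (fs : List ((ParamIdx L n → ℝ) → ℝ)),
      GoodChain (3 * (L - 2) + 5) fs →
      GoodChain (3 * (L - 2) + 5) (fs ++ blocksList L n σ x ps) := by
  intro ps
  induction ps with
  | nil => intro fs hfs; simpa [blocksList] using hfs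
  | cons p ps ih =>
    intro fs hfs
    have h1 := goodChain_append_pointBlock hσan hσd hL (x p) fs hfs
    have h2 := ih (fs ++ pointBlock L n σ (x p)) h1
    have : fs ++ blocksList L n σ x (p :: ps) =
        (fs ++ pointBlock L n σ (x p)) ++ blocksList L n σ x ps := by
      simp [blocksList, List.append_assoc]
    rw [this]
    exact h2

include hσan hσd in
lemma goodChain_full (hL : 2 ≤ L) {m : ℕ} (x : Fin m → Fin (n 0) → ℝ) (y : Fin m → ℝ) :
    GoodChain (3 * (L - 2) + 5)
      (blocksList L n σ x (List.finRange m) ++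
        [fun θ => ∑ p, (-(y p) * Real.log (logisticFn (netOutLin σ θ (x p))) -
          (1 - y p) * Real.log (1 - logisticFn (netOutLin σ θ (x p))))]) := by
  have hbig : GoodChain (3 * (L - 2) + 5) (blocksList L n σ x (List.finRange m)) := by
    have := goodChain_blocksList hσan hσd hL x (List.finRange m) [] (goodChain_nil _)
    simpa using this
  refine hbig.extend ?_ ?_
  · intro θ _
    exact Finset.analyticAt_fun_sum _ fun p _ => analyticAt_bceterm hσan (x p) (y p) θ
  · intro k
    refine polyIn_fderiv_Ffun hσan hσd x y hL _ ?_ ?_ k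
    · intro p l' hl' j'
      exact List.mem_append_left _ (mem_blocksList x (List.finRange m) p
        (List.mem_finRange p) (mem_pointBlock_Z (x p) l' hl' j'))
    · intro p
      exact List.mem_append_left _ (mem_blocksList x (List.finRange m) p
        (List.mem_finRange p) (mem_pointBlock_S (x p)))
end Build

/-- For a feedforward network with `L ≥ 2` layers, all hidden layers of
width `h`, hidden activation `tanh` or the logistic sigmoid, and last-layer output
`s(a^L)` with `s` the logistic sigmoid, the BCE empirical risk on a dataset of `m` points
is a Pfaffian function of the parameters of format `(3(L−2)+5, 1, m((L−1)h+1)+1)`. -/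
theorem statement6 (L : ℕ) (hL : 2 ≤ L) (h : ℕ) (n : ℕ → ℕ)
    (hhid : ∀ l : ℕ, 1 ≤ l → l ≤ L - 1 → n l = h) (hout : n L = 1)
    (σ : ℝ → ℝ) (hσ : σ = Real.tanh ∨ σ = logisticFn)
    (m : ℕ) (x : Fin m → Fin (n 0) → ℝ) (y : Fin m → ℝ) :
    IsPfaffianWithFormat (ι := ParamIdx L n) Set.univ
      (fun θ => ∑ p, (-(y p) * Real.log (logisticFn (netOutLin σ θ (x p))) -
        (1 - y p) * Real.log (1 - logisticFn (netOutLin σ θ (x p)))))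
      (3 * (L - 2) + 5) 1 (m * ((L - 1) * h + 1) + 1) := by
  -- get the analytic/derivative data for σ
  have hdata : (∀ t, AnalyticAt ℝ σ t) ∧
      ∃ a b c : ℝ, ∀ t, HasDerivAt σ (a + b * σ t + c * σ t ^ 2) t := by
    rcases hσ with rfl | rfl
    · refine ⟨analyticAt_tanh, 1, 0, -1, fun t => ?_⟩
      have := hasDerivAt_tanh t
      convert this using 1
      ring
    · refine ⟨analyticAt_logisticFn, 0, 1, -1, fun t => ?_⟩
      have := hasDerivAt_logisticFn t
      convert this using 1
      ring
  obtain ⟨hσan, a, b, c, hσd⟩ := hdata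
  set B := (L - 1) * h + 1 with hB
  set Ff : (ParamIdx L n → ℝ) → ℝ :=
    fun θ => ∑ p, (-(y p) * Real.log (logisticFn (netOutLin σ θ (x p))) -
      (1 - y p) * Real.log (1 - logisticFn (netOutLin σ θ (x p)))) with hFf
  set bigfs := blocksList L n σ x (List.finRange m) with hbigfs
  set fullfs := bigfs ++ [Ff] with hfullfs
  have hGC : GoodChain (3 * (L - 2) + 5) fullfs := goodChain_full hσan hσd hL x y
  have hbl : bigfs.length = m * B := by
    rw [hbigfs, length_blocksList (σ := σ) hhid x (List.finRange m)]
    simp [hB]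
  have hlen : fullfs.length = m * B + 1 := by
    simp [hfullfs, hbl]
  refine ⟨fun i => fullfs.get (Fin.cast hlen.symm i),
    hGC.isPfaffianChain hlen (by omega), ?_⟩
  refine ⟨X (Sum.inr ⟨m * B, by omega⟩), by simp [totalDegree_X], ?_⟩
  intro θ _
  rw [eval_X]
  simp only [Sum.elim_inr]
  have hget : fullfs.get (Fin.cast hlen.symm ⟨m * B, by omega⟩) = Ff := by
    have : fullfs.get (Fin.cast hlen.symm ⟨m * B, by omega⟩) = fullfs[m * B] := rfl
    rw [this]
    exact List.getElem_concat_length hbl.symm _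
  rw [hget]
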